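/- Let (R,σ) → (S,σ) be a map of difference rings. The following are equivalent: (1) the map is formally unramified in the difference category (for every difference ring (A,σ) and difference ideal I with I² = 0, there is at most one difference ring lift S → A of any given S → A/I over R); (2) the underlying ring map R → S is formally unramified; (3) Ω_{S/R} = 0. -/

import Mathlib

universe u

/-- Type synonym for twisting a module structure along a ring endomorphism. -/
def TwistTy {S : Type u} [CommRing S] (_σ : S →+* S) (M : Type u) : Type u := M

/-- Identity map into the twist. -/
def TwistTy.of {S : Type u} [CommRing S] (σ : S →+* S) {M : Type u} (m : M) : TwistTy σ M := m

/-- Identity map out of the twist. -/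
def TwistTy.out {S : Type u} [CommRing S] {σ : S →+* S} {M : Type u} (m : TwistTy σ M) : M := m

theorem exists_sigmaOmega {R S : Type u} [CommRing R] [CommRing S] [Algebra R S]
    (σR : R →+* R) (σS : S →+* S)
    (hcompat : ∀ r : R, σS (algebraMap R S r) = algebraMap R S (σR r)) :
    ∃ f : Ω[S⁄R] →+ Ω[S⁄R],
      (∀ (s : S) (ω : Ω[S⁄R]), f (s • ω) = σS s • f ω) ∧
      (∀ s : S, f (KaehlerDifferential.D R S s) = KaehlerDifferential.D R S (σS s)) := by
  letI : AddCommGroup (TwistTy σS (Ω[S⁄R])) := (inferInstance : AddCommGroup (Ω[S⁄R]))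
  letI : Module S (TwistTy σS (Ω[S⁄R])) := Module.compHom (Ω[S⁄R]) σS
  letI : Module R (TwistTy σS (Ω[S⁄R])) := Module.compHom (Ω[S⁄R]) (σS.comp (algebraMap R S))
  have hS : ∀ (s : S) (m : TwistTy σS (Ω[S⁄R])), (s • m).out = σS s • m.out := fun _ _ => rfl
  have hR : ∀ (r : R) (m : TwistTy σS (Ω[S⁄R])),
      (r • m).out = σS (algebraMap R S r) • m.out := fun _ _ => rfl
  have hAdd : ∀ (m n : TwistTy σS (Ω[S⁄R])), (m + n).out = m.out + n.out := fun _ _ => rfl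
  have hinj : ∀ a b : TwistTy σS (Ω[S⁄R]), a.out = b.out → a = b := fun _ _ h => h
  letI : IsScalarTower R S (TwistTy σS (Ω[S⁄R])) := by
    constructor
    intro r s m
    apply hinj
    rw [hS, hR, hS, Algebra.smul_def, map_mul, mul_smul]
  letI D' : Derivation R S (TwistTy σS (Ω[S⁄R])) :=
    { toFun := fun s => TwistTy.of σS (KaehlerDifferential.D R S (σS s))
      map_add' := fun a b => by
        apply hinj; rw [hAdd]
        show KaehlerDifferential.D R S (σS (a + b)) =
          KaehlerDifferential.D R S (σS a) + KaehlerDifferential.D R S (σS b)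
        rw [map_add, map_add]
      map_smul' := fun r s => by
        apply hinj; rw [hR]
        show KaehlerDifferential.D R S (σS (r • s)) =
          σS (algebraMap R S r) • KaehlerDifferential.D R S (σS s)
        rw [Algebra.smul_def, map_mul, hcompat, Derivation.leibniz,
          Derivation.map_algebraMap, smul_zero, add_zero, ← hcompat]
      map_one_eq_zero' := by
        apply hinj
        show KaehlerDifferential.D R S (σS 1) = (0 : Ω[S⁄R])
        rw [map_one, Derivation.map_one_eq_zero]
      leibniz' := fun a b => by
        apply hinj; rw [hAdd, hS, hS]
        show KaehlerDifferential.D R S (σS (a * b)) =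
          σS a • KaehlerDifferential.D R S (σS b) + σS b • KaehlerDifferential.D R S (σS a)
        rw [map_mul, Derivation.leibniz] }
  letI f0 : Ω[S⁄R] →ₗ[S] TwistTy σS (Ω[S⁄R]) := D'.liftKaehlerDifferential
  refine ⟨{ toFun := fun ω => (f0 ω).out,
            map_zero' := congrArg TwistTy.out (map_zero f0),
            map_add' := fun a b => by show (f0 (a+b)).out = (f0 a).out + (f0 b).out; rw [map_add f0, hAdd] }, ?_, ?_⟩
  · intro s ω
    show (f0 (s • ω)).out = σS s • (f0 ω).out
    rw [map_smul, hS]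
  · intro s
    show (f0 (KaehlerDifferential.D R S s)).out = KaehlerDifferential.D R S (σS s)
    rw [Derivation.liftKaehlerDifferential_comp_D]
    rfl

set_option maxHeartbeats 1000000 in
/-- for a map of difference rings `(R,σR) → (S,σS)` the following are
equivalent: (1) formal unramifiedness in the difference category (at most one
difference lift against square-zero difference ideals); (2) formal unramifiedness
of the underlying ring map; (3) `Ω[S⁄R] = 0`. -/
theorem stmt17 {R S : Type u} [CommRing R] [CommRing S] [Algebra R S]
    (σR : R →+* R) (σS : S →+* S)
    (hcompat : ∀ r : R, σS (algebraMap R S r) = algebraMap R S (σR r)) :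
    ((∀ (A : Type u) (_ : CommRing A) (σA : A →+* A) (I : Ideal A),
        I ≤ I.comap σA → I * I = ⊥ →
        ∀ w₁ w₂ : S →+* A,
          w₁.comp (algebraMap R S) = w₂.comp (algebraMap R S) →
          σA.comp w₁ = w₁.comp σS → σA.comp w₂ = w₂.comp σS →
          (Ideal.Quotient.mk I).comp w₁ = (Ideal.Quotient.mk I).comp w₂ →
          w₁ = w₂) ↔
      Algebra.FormallyUnramified R S) ∧
    (Algebra.FormallyUnramified R S ↔ ∀ ω : Ω[S⁄R], ω = 0) := by
  have hsub : (∀ ω : Ω[S⁄R], ω = 0) ↔ Algebra.FormallyUnramified R S := by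
    constructor
    · intro h
      exact ⟨⟨fun a b => by rw [h a, h b]⟩⟩
    · intro h ω
      exact Subsingleton.elim ω 0
  refine ⟨⟨?_, ?_⟩, hsub.symm⟩
  · -- difference formally unramified → formally unramified
    intro h
    rw [← hsub]
    -- set up the square-zero extension `TrivSqZeroExt S Ω` with its difference structure
    obtain ⟨f, hfsmul, hfD⟩ := exists_sigmaOmega σR σS hcompat
    letI : Module Sᵐᵒᵖ (Ω[S⁄R]) := Module.compHom (Ω[S⁄R]) ((RingHom.id S).fromOpposite mul_comm)
    letI : IsCentralScalar S (Ω[S⁄R]) := ⟨fun _ _ => rfl⟩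
    letI : SMulCommClass S Sᵐᵒᵖ (Ω[S⁄R]) := ⟨fun s t m => by
      show s • t.unop • m = t.unop • s • m
      rw [smul_comm]⟩
    have hop : ∀ (s : S) (m : Ω[S⁄R]), MulOpposite.op s • m = s • m := fun _ _ => rfl
    set A := TrivSqZeroExt S (Ω[S⁄R]) with hA
    -- the difference operator on A
    letI σA : A →+* A :=
      { toFun := fun x => ⟨σS x.fst, f x.snd⟩
        map_one' := by
          refine TrivSqZeroExt.ext ?_ ?_ <;> simp
        map_mul' := fun x y => by
          refine TrivSqZeroExt.ext ?_ ?_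
          · show σS (x.fst * y.fst) = σS x.fst * σS y.fst
            exact map_mul σS _ _
          · show f (x.fst • y.snd + y.fst • x.snd) = σS x.fst • f y.snd + σS y.fst • f x.snd
            rw [map_add, hfsmul, hfsmul]
        map_zero' := by
          refine TrivSqZeroExt.ext ?_ ?_ <;> simp
        map_add' := fun x y => by
          refine TrivSqZeroExt.ext ?_ ?_
          · show σS (x.fst + y.fst) = σS x.fst + σS y.fst
            exact map_add σS _ _
          · show f (x.snd + y.snd) = f x.snd + f y.snd
            exact map_add f _ _ }
    -- the ideal
    letI I : Ideal A :=
      { carrier := {x : A | x.fst = 0}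
        add_mem' := fun {x y} hx hy => by
          show (x + y).fst = 0
          rw [TrivSqZeroExt.fst_add, hx, hy, add_zero]
        zero_mem' := by show TrivSqZeroExt.fst (0 : A) = 0; rw [TrivSqZeroExt.fst_zero]
        smul_mem' := fun c x hx => by
          show (c * x).fst = 0
          rw [TrivSqZeroExt.fst_mul, hx, mul_zero] }
    have hmemI : ∀ x : A, x ∈ I ↔ x.fst = 0 := fun x => Iff.rfl
    -- the two ring homomorphisms
    letI w₁ : S →+* A := TrivSqZeroExt.inlHom S (Ω[S⁄R])
    letI w₂ : S →+* A :=
      { toFun := fun s => ⟨s, KaehlerDifferential.D R S s⟩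
        map_one' := by
          refine TrivSqZeroExt.ext rfl ?_
          simp
        map_mul' := fun a b => by
          refine TrivSqZeroExt.ext rfl ?_
          simp only [TrivSqZeroExt.snd_mul, hop, Derivation.leibniz]
          rfl
        map_zero' := by
          refine TrivSqZeroExt.ext rfl ?_
          simp
        map_add' := fun a b => by
          refine TrivSqZeroExt.ext rfl ?_
          show KaehlerDifferential.D R S (a + b) =
            KaehlerDifferential.D R S a + KaehlerDifferential.D R S b
          rw [map_add] }
    have key : w₁ = w₂ := by
      refine h A inferInstance σA I ?_ ?_ w₁ w₂ ?_ ?_ ?_ ?_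
      · intro x hx
        rw [hmemI] at hx
        show σS x.fst = 0
        rw [hx, map_zero]
      · rw [eq_bot_iff]
        refine (Ideal.mul_le).mpr ?_
        intro x hx y hy
        rw [hmemI] at hx hy
        rw [Ideal.mem_bot]
        refine TrivSqZeroExt.ext ?_ ?_
        · show x.fst * y.fst = 0; rw [hx, zero_mul]
        · show x.fst • y.snd + MulOpposite.op y.fst • x.snd = 0
          rw [hx, hy, zero_smul, hop, zero_smul, add_zero]
      · refine RingHom.ext fun r => ?_
        refine TrivSqZeroExt.ext rfl ?_
        show (0 : Ω[S⁄R]) = KaehlerDifferential.D R S (algebraMap R S r)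
        rw [Derivation.map_algebraMap]
      · refine RingHom.ext fun s => ?_
        refine TrivSqZeroExt.ext rfl ?_
        show f 0 = (0 : Ω[S⁄R])
        rw [map_zero]
      · refine RingHom.ext fun s => ?_
        refine TrivSqZeroExt.ext rfl ?_
        show f (KaehlerDifferential.D R S s) = KaehlerDifferential.D R S (σS s)
        exact hfD s
      · refine RingHom.ext fun s => ?_
        rw [RingHom.comp_apply, RingHom.comp_apply, Ideal.Quotient.mk_eq_mk_iff_sub_mem, hmemI]
        show (s : S) - s = 0
        rw [sub_self]
    have hD : ∀ s : S, KaehlerDifferential.D R S s = 0 := by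
      intro s
      have := congrArg TrivSqZeroExt.snd (RingHom.congr_fun key s)
      exact this.symm
    intro ω
    have hω : ω ∈ (⊤ : Submodule S (Ω[S⁄R])) := trivial
    rw [← KaehlerDifferential.span_range_derivation] at hω
    refine Submodule.span_induction ?_ rfl (fun x y _ _ hx hy => by rw [hx, hy, add_zero])
      (fun s x _ hx => by rw [hx, smul_zero]) hω
    rintro _ ⟨s, rfl⟩
    exact hD s
  · -- formally unramified → difference formally unramified
    intro hFU A _ σA I hIσ hI2 w₁ w₂ hR h1 h2 hq
    letI : Algebra R A := (w₁.comp (algebraMap R S)).toAlgebra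
    letI f₁ : S →ₐ[R] A := { w₁ with commutes' := fun r => rfl }
    letI f₂ : S →ₐ[R] A :=
      { w₂ with commutes' := fun r => (RingHom.congr_fun hR r).symm }
    have hinj := Algebra.FormallyUnramified.comp_injective (R := R) (A := S) (B := A) I
      (by rwa [pow_two])
    have he : (Ideal.Quotient.mkₐ R I).comp f₁ = (Ideal.Quotient.mkₐ R I).comp f₂ :=
      AlgHom.ext fun s => RingHom.congr_fun hq s
    have := hinj he
    exact RingHom.ext fun s => AlgHom.congr_fun this s
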